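/- arXiv:1802.03832 — 2 statements merged into one kernel-verified Lean document; each statement's English description precedes it below -/
import Mathlib

section
/- Let h be kernel ridge regression prediction with PSD kernel matrix K ∈ R^{n×n}, test kernel vector k_x, regularization λ > 0: h(x) = y^T (K + λI)^{-1} k_x, and let ĥ be the same with PSD approximation K̂ and k̂_x. Assume Σ y_i = 0, σ_y² = (1/n)Σ y_i², and ‖k_x‖_∞ ≤ κ. Then |ĥ(x) − h(x)| ≤ (σ_y √n / λ)‖k̂_x − k_x‖₂ + (κ σ_y n / λ²)‖K̂ − K‖₂. -/
open MeasureTheory Real Matrix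

section aux

variable {n : ℕ}

private noncomputable def en (v : Fin n → ℝ) : ℝ :=
  ‖(WithLp.equiv 2 (Fin n → ℝ)).symm v‖

private lemma en_nonneg (v : Fin n → ℝ) : 0 ≤ en v := norm_nonneg _

private lemma dot_eq_inner (u v : Fin n → ℝ) :
    u ⬝ᵥ v = (inner ℝ ((WithLp.equiv 2 (Fin n → ℝ)).symm u)
      ((WithLp.equiv 2 (Fin n → ℝ)).symm v) : ℝ) := by
  change u ⬝ᵥ v = v ⬝ᵥ star u
  rw [star_trivial, dotProduct_comm]

private lemma abs_dot_le (u v : Fin n → ℝ) : |u ⬝ᵥ v| ≤ en u * en v := by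
  rw [dot_eq_inner]
  exact abs_real_inner_le_norm _ _

private lemma en_sq (v : Fin n → ℝ) : en v ^ 2 = v ⬝ᵥ v := by
  rw [dot_eq_inner, real_inner_self_eq_norm_sq]
  rfl

/-- Key bound: for PSD `K` and `lam > 0`, `‖(K+lam•1)⁻¹ v‖ ≤ ‖v‖ / lam`. -/
private lemma inv_mulVec_bound {K : Matrix (Fin n) (Fin n) ℝ} (hK : K.PosSemidef)
    {lam : ℝ} (hlam : 0 < lam) (v : Fin n → ℝ) :
    en ((K + lam • (1 : Matrix (Fin n) (Fin n) ℝ))⁻¹ *ᵥ v) ≤ en v / lam := by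
  have hone : (lam • (1 : Matrix (Fin n) (Fin n) ℝ)).PosDef := by
    rw [Matrix.smul_one_eq_diagonal]
    exact Matrix.posDef_diagonal_iff.mpr fun _ => hlam
  have hA : (K + lam • (1 : Matrix (Fin n) (Fin n) ℝ)).PosDef := Matrix.PosDef.posSemidef_add hK hone
  set A := K + lam • (1 : Matrix (Fin n) (Fin n) ℝ) with hAdef
  have hunit : IsUnit A := hA.isUnit
  set w := A⁻¹ *ᵥ v with hw
  have hAw : A *ᵥ w = v := by
    rw [hw, Matrix.mulVec_mulVec, Matrix.mul_nonsing_inv _ (isUnit_iff_isUnit_det _ |>.1 hunit),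
      Matrix.one_mulVec]
  have hquad : lam * (w ⬝ᵥ w) ≤ w ⬝ᵥ v := by
    have hKw : 0 ≤ w ⬝ᵥ (K *ᵥ w) := by
      have := hK.dotProduct_mulVec_nonneg w
      simpa using this
    have : w ⬝ᵥ v = w ⬝ᵥ (K *ᵥ w) + lam * (w ⬝ᵥ w) := by
      rw [← hAw, hAdef, Matrix.add_mulVec, dotProduct_add, Matrix.smul_mulVec,
        Matrix.one_mulVec, dotProduct_smul, smul_eq_mul]
    linarith
  have hww : lam * en w ^ 2 ≤ en w * en v := by
    calc lam * en w ^ 2 = lam * (w ⬝ᵥ w) := by rw [en_sq]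
    _ ≤ w ⬝ᵥ v := hquad
    _ ≤ |w ⬝ᵥ v| := le_abs_self _
    _ ≤ en w * en v := abs_dot_le _ _
  rcases eq_or_lt_of_le (en_nonneg w) with h0 | h0
  · rw [← h0]
    exact div_nonneg (en_nonneg v) hlam.le
  · rw [le_div_iff₀ hlam]
    nlinarith [hww, h0]
end aux

/-- Stability of kernel ridge regression w.r.t. kernel perturbations
(Proposition of Sutherland–Schneider): with PSD kernel matrices `K, K̂`, test kernel vectors
`k_x, k̂_x` with `‖k_x‖_∞ ≤ κ`, centered labels `y` with `σ_y² = (1/n) Σ y_i²`, and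
regularization `λ > 0`, the predictions `h(x) = yᵀ(K + λI)⁻¹k_x` and
`ĥ(x) = yᵀ(K̂ + λI)⁻¹k̂_x` satisfy
`|ĥ(x) − h(x)| ≤ (σ_y √n / λ)‖k̂_x − k_x‖₂ + (κ σ_y n / λ²)‖K̂ − K‖₂`,
where `‖·‖₂` is the Euclidean norm for vectors and the spectral norm for matrices. -/
theorem krr_stability (n : ℕ) (hn : 1 ≤ n)
    (K Khat : Matrix (Fin n) (Fin n) ℝ) (hK : K.PosSemidef) (hKhat : Khat.PosSemidef)
    (lam : ℝ) (hlam : 0 < lam)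
    (y kx kxhat : Fin n → ℝ) (hy : ∑ i, y i = 0)
    (σy : ℝ) (hσy : σy = Real.sqrt ((1 / (n : ℝ)) * ∑ i, y i ^ 2))
    (κ : ℝ) (hkx : ∀ i, |kx i| ≤ κ)
    (h hhat : ℝ)
    (hdef : h = y ⬝ᵥ ((K + lam • (1 : Matrix (Fin n) (Fin n) ℝ))⁻¹ *ᵥ kx))
    (hhatdef : hhat = y ⬝ᵥ ((Khat + lam • (1 : Matrix (Fin n) (Fin n) ℝ))⁻¹ *ᵥ kxhat)) :
    |hhat - h| ≤
      (σy * Real.sqrt n / lam) *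
          ‖(WithLp.equiv 2 (Fin n → ℝ)).symm (kxhat - kx)‖ +
        (κ * σy * n / lam ^ 2) * ‖Matrix.toEuclideanCLM (𝕜 := ℝ) (Khat - K)‖ := by
  have hone : (lam • (1 : Matrix (Fin n) (Fin n) ℝ)).PosDef := by
    rw [Matrix.smul_one_eq_diagonal]
    exact Matrix.posDef_diagonal_iff.mpr fun _ => hlam
  set A := K + lam • (1 : Matrix (Fin n) (Fin n) ℝ) with hAdef
  set Ahat := Khat + lam • (1 : Matrix (Fin n) (Fin n) ℝ) with hAhatdef
  have hA : A.PosDef := Matrix.PosDef.posSemidef_add hK hone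
  have hAh : Ahat.PosDef := Matrix.PosDef.posSemidef_add hKhat hone
  have hAu : IsUnit A.det := (Matrix.isUnit_iff_isUnit_det _).1 hA.isUnit
  have hAhu : IsUnit Ahat.det := (Matrix.isUnit_iff_isUnit_det _).1 hAh.isUnit
  set d := kxhat - kx with hd
  set w := A⁻¹ *ᵥ kx with hw
  -- matrix identity
  have hmat : Ahat⁻¹ - A⁻¹ = Ahat⁻¹ * (K - Khat) * A⁻¹ := by
    have h1 : A - Ahat = K - Khat := by rw [hAdef, hAhatdef]; abel
    calc Ahat⁻¹ - A⁻¹ = Ahat⁻¹ * (A * A⁻¹) - (Ahat⁻¹ * Ahat) * A⁻¹ := by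
          rw [Matrix.mul_nonsing_inv _ hAu, Matrix.nonsing_inv_mul _ hAhu, mul_one, one_mul]
    _ = Ahat⁻¹ * (A - Ahat) * A⁻¹ := by noncomm_ring
    _ = Ahat⁻¹ * (K - Khat) * A⁻¹ := by rw [h1]
  have hsplit : hhat - h = y ⬝ᵥ (Ahat⁻¹ *ᵥ d) + y ⬝ᵥ (Ahat⁻¹ *ᵥ ((K - Khat) *ᵥ w)) := by
    rw [hhatdef, hdef]
    have h2 : Ahat⁻¹ *ᵥ ((K - Khat) *ᵥ w) = Ahat⁻¹ *ᵥ kx - A⁻¹ *ᵥ kx := by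
      rw [hw, Matrix.mulVec_mulVec, Matrix.mulVec_mulVec, ← hmat,
        Matrix.sub_mulVec]
    rw [h2, hd, Matrix.mulVec_sub]
    simp only [dotProduct_sub]
    ring
  -- norm facts
  have hκ : 0 ≤ κ := le_trans (abs_nonneg _) (hkx ⟨0, hn⟩)
  have hnpos : (0:ℝ) < n := by exact_mod_cast hn
  have heny : en y = σy * Real.sqrt n := by
    have h1 : en y = Real.sqrt (∑ i, y i ^ 2) := by
      rw [← Real.sqrt_sq (en_nonneg y), en_sq]
      congr 1
      simp [dotProduct, sq]
    rw [h1, hσy, ← Real.sqrt_mul (by positivity)]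
    congr 1
    field_simp
  have henkx : en kx ≤ Real.sqrt n * κ := by
    have h1 : en kx ^ 2 ≤ (Real.sqrt n * κ) ^ 2 := by
      rw [en_sq, mul_pow, Real.sq_sqrt hnpos.le]
      calc kx ⬝ᵥ kx = ∑ i, kx i * kx i := rfl
      _ ≤ ∑ _i : Fin n, κ ^ 2 := by
          apply Finset.sum_le_sum
          intro i _
          have := hkx i
          nlinarith [abs_nonneg (kx i), le_abs_self (kx i), neg_abs_le (kx i)]
      _ = n * κ ^ 2 := by simp [Finset.sum_const, mul_comm]
    have h2 := Real.sqrt_le_sqrt h1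
    rwa [Real.sqrt_sq (en_nonneg kx), Real.sqrt_sq (by positivity)] at h2
  set Nm := ‖Matrix.toEuclideanCLM (𝕜 := ℝ) (Khat - K)‖ with hNm
  have hNm0 : 0 ≤ Nm := norm_nonneg _
  have hop : ∀ v : Fin n → ℝ, en ((K - Khat) *ᵥ v) ≤ Nm * en v := by
    intro v
    have h1 : (WithLp.equiv 2 (Fin n → ℝ)).symm ((K - Khat) *ᵥ v) =
        (Matrix.toEuclideanCLM (𝕜 := ℝ) (K - Khat)) ((WithLp.equiv 2 (Fin n → ℝ)).symm v) := by
      exact (Matrix.toEuclideanCLM_toLp _ _).symm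
    have h2 : ‖Matrix.toEuclideanCLM (𝕜 := ℝ) (K - Khat)‖ = Nm := by
      rw [hNm, ← norm_neg]
      congr 1
      rw [← map_neg, neg_sub]
    calc en ((K - Khat) *ᵥ v) ≤ ‖Matrix.toEuclideanCLM (𝕜 := ℝ) (K - Khat)‖ *
          ‖(WithLp.equiv 2 (Fin n → ℝ)).symm v‖ := by
          rw [en, h1]; exact ContinuousLinearMap.le_opNorm _ _
    _ = Nm * en v := by rw [h2]; rfl
  -- term bounds
  have ht1 : |y ⬝ᵥ (Ahat⁻¹ *ᵥ d)| ≤ en y * (en d / lam) := by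
    calc |y ⬝ᵥ (Ahat⁻¹ *ᵥ d)| ≤ en y * en (Ahat⁻¹ *ᵥ d) := abs_dot_le _ _
    _ ≤ en y * (en d / lam) := by
        have := inv_mulVec_bound hKhat hlam (n := n) d
        exact mul_le_mul_of_nonneg_left this (en_nonneg y)
  have hw1 : en w ≤ en kx / lam := inv_mulVec_bound hK hlam kx
  have ht2 : |y ⬝ᵥ (Ahat⁻¹ *ᵥ ((K - Khat) *ᵥ w))| ≤ en y * (Nm * (en kx / lam) / lam) := by
    calc |y ⬝ᵥ (Ahat⁻¹ *ᵥ ((K - Khat) *ᵥ w))|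
        ≤ en y * en (Ahat⁻¹ *ᵥ ((K - Khat) *ᵥ w)) := abs_dot_le _ _
    _ ≤ en y * (en ((K - Khat) *ᵥ w) / lam) :=
        mul_le_mul_of_nonneg_left (inv_mulVec_bound hKhat hlam _) (en_nonneg y)
    _ ≤ en y * (Nm * (en kx / lam) / lam) := by
        apply mul_le_mul_of_nonneg_left _ (en_nonneg y)
        apply (div_le_div_iff_of_pos_right hlam).mpr
        calc en ((K - Khat) *ᵥ w) ≤ Nm * en w := hop w
        _ ≤ Nm * (en kx / lam) := mul_le_mul_of_nonneg_left hw1 hNm0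
  have hend : en d = ‖(WithLp.equiv 2 (Fin n → ℝ)).symm (kxhat - kx)‖ := rfl
  have hσy0 : 0 ≤ σy := hσy ▸ Real.sqrt_nonneg _
  have hsqn : Real.sqrt n * Real.sqrt n = n := Real.mul_self_sqrt hnpos.le
  calc |hhat - h| ≤ |y ⬝ᵥ (Ahat⁻¹ *ᵥ d)| + |y ⬝ᵥ (Ahat⁻¹ *ᵥ ((K - Khat) *ᵥ w))| := by
        rw [hsplit]; exact abs_add_le _ _
  _ ≤ en y * (en d / lam) + en y * (Nm * (en kx / lam) / lam) := add_le_add ht1 ht2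
  _ ≤ (σy * Real.sqrt n / lam) * en d + (κ * σy * n / lam ^ 2) * Nm := by
      have hb : en y * (Nm * (en kx / lam) / lam) ≤ (κ * σy * n / lam ^ 2) * Nm := by
        rw [heny]
        have h3 : σy * Real.sqrt n * (Nm * (en kx / lam) / lam) =
            (σy * Real.sqrt n * en kx / lam ^ 2) * Nm := by field_simp
        rw [h3]
        apply mul_le_mul_of_nonneg_right _ hNm0
        apply (div_le_div_iff_of_pos_right (by positivity)).mpr
        calc σy * Real.sqrt n * en kx ≤ σy * Real.sqrt n * (Real.sqrt n * κ) := by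
              apply mul_le_mul_of_nonneg_left henkx (by positivity)
        _ = κ * σy * n := by linear_combination σy * κ * hsqn
      have ha : en y * (en d / lam) = (σy * Real.sqrt n / lam) * en d := by
        rw [heny]; field_simp; try ring
      linarith
  _ = (σy * Real.sqrt n / lam) * ‖(WithLp.equiv 2 (Fin n → ℝ)).symm (kxhat - kx)‖ +
        (κ * σy * n / lam ^ 2) * Nm := by rw [hend]
end

section
/- If sup_{x,x'} |k̂(x,x') − k(x,x')| ≤ ε for all points, then for the n×n kernel matrices ‖K̂ − K‖₂ ≤ ‖K̂ − K‖_F ≤ nε, and for the test kernel vectors ‖k̂_x − k_x‖₂ ≤ √n ε; consequently, with λ = nλ₀, the kernel ridge regression predictions satisfy |ĥ(x) − h(x)| ≤ ((λ₀+1)/λ₀²) σ_y ε. -/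
open MeasureTheory Real Matrix

namespace KRRAux


variable {n : ℕ}

noncomputable def N (v : Fin n → ℝ) : ℝ := ‖(WithLp.equiv 2 (Fin n → ℝ)).symm v‖

lemma N_eq (v : Fin n → ℝ) : N v = Real.sqrt (∑ i, v i ^ 2) := by
  simp [N, EuclideanSpace.norm_eq, Real.norm_eq_abs, sq_abs]

lemma N_nonneg (v : Fin n → ℝ) : 0 ≤ N v := norm_nonneg _

lemma N_sq (v : Fin n → ℝ) : N v ^ 2 = ∑ i, v i ^ 2 := by
  rw [N_eq, Real.sq_sqrt (Finset.sum_nonneg fun i _ => sq_nonneg _)]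

lemma cs (u v : Fin n → ℝ) : |u ⬝ᵥ v| ≤ N u * N v := by
  have h := abs_real_inner_le_norm ((WithLp.equiv 2 (Fin n → ℝ)).symm u)
    ((WithLp.equiv 2 (Fin n → ℝ)).symm v)
  rw [real_inner_comm] at h
  simpa [PiLp.inner_apply, dotProduct, N, RCLike.inner_apply, mul_comm] using h

lemma N_mulVec_le (D : Matrix (Fin n) (Fin n) ℝ) (w : Fin n → ℝ) :
    N (D *ᵥ w) ≤ Real.sqrt (∑ i, ∑ j, D i j ^ 2) * N w := by
  have hF : (0:ℝ) ≤ Real.sqrt (∑ i, ∑ j, D i j ^ 2) := Real.sqrt_nonneg _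
  have h1 : ∑ i, (D *ᵥ w) i ^ 2 ≤ (∑ i, ∑ j, D i j ^ 2) * ∑ j, w j ^ 2 := by
    rw [Finset.sum_mul]
    refine Finset.sum_le_sum fun i _ => ?_
    have := Finset.sum_mul_sq_le_sq_mul_sq (R := ℝ) Finset.univ (fun j => D i j) w
    simpa [Matrix.mulVec, dotProduct] using this
  have h2 : (∑ i, ∑ j, D i j ^ 2) * ∑ j, w j ^ 2
      = (Real.sqrt (∑ i, ∑ j, D i j ^ 2) * N w) ^ 2 := by
    rw [mul_pow, Real.sq_sqrt (show (0:ℝ) ≤ ∑ i, ∑ j, D i j ^ 2 by positivity), N_sq]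
  rw [N_eq]
  calc Real.sqrt (∑ i, (D *ᵥ w) i ^ 2)
      ≤ Real.sqrt ((Real.sqrt (∑ i, ∑ j, D i j ^ 2) * N w) ^ 2) :=
        Real.sqrt_le_sqrt (h2 ▸ h1)
    _ = Real.sqrt (∑ i, ∑ j, D i j ^ 2) * N w :=
        Real.sqrt_sq (mul_nonneg hF (N_nonneg _))

lemma posDef_add_smul_one {A : Matrix (Fin n) (Fin n) ℝ} (hA : A.PosSemidef)
    {c : ℝ} (hc : 0 < c) : (A + c • (1 : Matrix (Fin n) (Fin n) ℝ)).PosDef := by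
  refine Matrix.PosDef.of_dotProduct_mulVec_pos ?_ ?_
  · refine IsHermitian.add hA.isHermitian ?_
    simp [Matrix.IsHermitian, Matrix.conjTranspose_smul]
  · intro x hx
    have h1 : (0:ℝ) ≤ x ⬝ᵥ (A *ᵥ x) := by simpa using hA.dotProduct_mulVec_nonneg x
    have h2 : (0:ℝ) < x ⬝ᵥ x := by
      simpa using dotProduct_star_self_pos_iff.mpr hx
    have : x ⬝ᵥ ((A + c • (1 : Matrix (Fin n) (Fin n) ℝ)) *ᵥ x)
        = x ⬝ᵥ (A *ᵥ x) + c * (x ⬝ᵥ x) := by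
      simp [Matrix.add_mulVec, Matrix.smul_mulVec, dotProduct_add, dotProduct_smul,
        smul_eq_mul]
    simpa [this] using add_pos_of_nonneg_of_pos h1 (mul_pos hc h2)

lemma N_inv_mulVec_le {A : Matrix (Fin n) (Fin n) ℝ} (hA : A.PosSemidef)
    {c : ℝ} (hc : 0 < c) (v : Fin n → ℝ) :
    N ((A + c • (1 : Matrix (Fin n) (Fin n) ℝ))⁻¹ *ᵥ v) ≤ (1 / c) * N v := by
  set M := A + c • (1 : Matrix (Fin n) (Fin n) ℝ) with hM
  have hMpd := posDef_add_smul_one hA hc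
  set u := M⁻¹ *ᵥ v with hu
  have hMu : M *ᵥ u = v := by
    rw [hu, Matrix.mulVec_mulVec, Matrix.mul_nonsing_inv _ (isUnit_iff_isUnit_det _ |>.mp hMpd.isUnit), Matrix.one_mulVec]
  have h1 : (0:ℝ) ≤ u ⬝ᵥ (A *ᵥ u) := by simpa using hA.dotProduct_mulVec_nonneg u
  have huu : u ⬝ᵥ u = N u ^ 2 := by
    rw [N_sq]; simp [dotProduct, sq]
  have key : c * N u ^ 2 ≤ N u * N v := by
    have h2 : u ⬝ᵥ v = u ⬝ᵥ (A *ᵥ u) + c * (u ⬝ᵥ u) := by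
      rw [← hMu]
      simp [hM, Matrix.add_mulVec, Matrix.smul_mulVec, dotProduct_add, dotProduct_smul,
        smul_eq_mul]
    have : c * N u ^ 2 ≤ u ⬝ᵥ v := by
      rw [h2, ← huu]; linarith
    exact this.trans ((le_abs_self _).trans (cs u v))
  rcases eq_or_lt_of_le (N_nonneg u) with h0 | h0
  · rw [← h0]
    exact mul_nonneg (by positivity) (N_nonneg v)
  · have hcu : c * N u ≤ N v := by nlinarith
    rw [one_div, inv_mul_eq_div, le_div_iff₀ hc]
    linarith

end KRRAux

open KRRAux

/-- If the kernel approximation has uniform entrywise error at most `ε`, then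
`‖K̂ − K‖₂ ≤ ‖K̂ − K‖_F ≤ nε` (spectral and Frobenius norms), `‖k̂_x − k_x‖₂ ≤ √n ε`, and,
with regularization `λ = nλ₀` and a kernel bounded by `1`, the kernel ridge regression
predictions satisfy `|ĥ(x) − h(x)| ≤ ((λ₀+1)/λ₀²) σ_y ε`. -/
theorem krr_stability_of_uniform_kernel_error (n : ℕ) (hn : 1 ≤ n)
    (K Khat : Matrix (Fin n) (Fin n) ℝ) (hK : K.PosSemidef) (hKhat : Khat.PosSemidef)
    (ε : ℝ) (hε : 0 ≤ ε)
    (hKerr : ∀ i j, |Khat i j - K i j| ≤ ε)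
    (y kx kxhat : Fin n → ℝ) (hy : ∑ i, y i = 0)
    (hkx : ∀ i, |kx i| ≤ 1)
    (hkerr : ∀ i, |kxhat i - kx i| ≤ ε)
    (σy : ℝ) (hσy : σy = Real.sqrt ((1 / (n : ℝ)) * ∑ i, y i ^ 2))
    (lam₀ : ℝ) (hlam₀ : 0 < lam₀)
    (h hhat : ℝ)
    (hdef : h = y ⬝ᵥ ((K + ((n : ℝ) * lam₀) • (1 : Matrix (Fin n) (Fin n) ℝ))⁻¹ *ᵥ kx))
    (hhatdef : hhat =
      y ⬝ᵥ ((Khat + ((n : ℝ) * lam₀) • (1 : Matrix (Fin n) (Fin n) ℝ))⁻¹ *ᵥ kxhat)) :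
    ‖Matrix.toEuclideanCLM (𝕜 := ℝ) (Khat - K)‖ ≤
        Real.sqrt (∑ i, ∑ j, (Khat i j - K i j) ^ 2) ∧
      Real.sqrt (∑ i, ∑ j, (Khat i j - K i j) ^ 2) ≤ (n : ℝ) * ε ∧
      ‖(WithLp.equiv 2 (Fin n → ℝ)).symm (kxhat - kx)‖ ≤ Real.sqrt n * ε ∧
      |hhat - h| ≤ ((lam₀ + 1) / lam₀ ^ 2) * σy * ε := by
  have hn0 : (0:ℝ) < n := by exact_mod_cast hn
  set s : ℝ := Real.sqrt n with hs_def
  have hs : s * s = (n:ℝ) := Real.mul_self_sqrt hn0.le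
  have hs0 : 0 ≤ s := Real.sqrt_nonneg _
  set F : ℝ := Real.sqrt (∑ i, ∑ j, (Khat i j - K i j) ^ 2) with hF_def
  -- Part 1: spectral ≤ Frobenius
  have part1 : ‖Matrix.toEuclideanCLM (𝕜 := ℝ) (Khat - K)‖ ≤ F := by
    refine ContinuousLinearMap.opNorm_le_bound _ (Real.sqrt_nonneg _) fun x => ?_
    have hx : (WithLp.equiv 2 (Fin n → ℝ)).symm (WithLp.equiv 2 (Fin n → ℝ) x) = x :=
      Equiv.symm_apply_apply _ _
    rw [← hx, WithLp.equiv_symm_apply, Matrix.toEuclideanCLM_toLp, ← WithLp.equiv_symm_apply]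
    have := N_mulVec_le (Khat - K) (WithLp.equiv 2 (Fin n → ℝ) x)
    simp only [N] at this
    convert this using 3 <;> simp [Matrix.sub_apply]
  -- Part 2: Frobenius ≤ n ε
  have part2 : F ≤ (n:ℝ) * ε := by
    have hsum : ∑ i, ∑ j, (Khat i j - K i j) ^ 2 ≤ ((n:ℝ) * ε) ^ 2 := by
      have : ((n:ℝ) * ε) ^ 2 = ∑ _i : Fin n, ∑ _j : Fin n, ε ^ 2 := by
        simp [Finset.sum_const]; ring
      rw [this]
      refine Finset.sum_le_sum fun i _ => Finset.sum_le_sum fun j _ => ?_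
      have := hKerr i j
      nlinarith [abs_nonneg (Khat i j - K i j), sq_abs (Khat i j - K i j)]
    calc F ≤ Real.sqrt (((n:ℝ) * ε) ^ 2) := Real.sqrt_le_sqrt hsum
      _ = (n:ℝ) * ε := Real.sqrt_sq (by positivity)
  -- Part 3: test vector bound
  have hNdk : N (kxhat - kx) ≤ s * ε := by
    rw [N_eq]
    have hsum : ∑ i, (kxhat - kx) i ^ 2 ≤ (s * ε) ^ 2 := by
      have : (s * ε) ^ 2 = ∑ _i : Fin n, ε ^ 2 := by
        rw [Finset.sum_const, Finset.card_univ, Fintype.card_fin, nsmul_eq_mul, mul_pow,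
          hs_def, Real.sq_sqrt hn0.le]
      rw [this]
      refine Finset.sum_le_sum fun i _ => ?_
      have := hkerr i
      simp only [Pi.sub_apply]
      nlinarith [abs_nonneg (kxhat i - kx i), sq_abs (kxhat i - kx i)]
    calc Real.sqrt (∑ i, (kxhat - kx) i ^ 2) ≤ Real.sqrt ((s * ε) ^ 2) :=
          Real.sqrt_le_sqrt hsum
      _ = s * ε := Real.sqrt_sq (by positivity)
  have part3 : ‖(WithLp.equiv 2 (Fin n → ℝ)).symm (kxhat - kx)‖ ≤ s * ε := hNdk
  -- Part 4
  refine ⟨part1, part2, part3, ?_⟩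
  set lam : ℝ := (n:ℝ) * lam₀ with hlam_def
  have hlampos : 0 < lam := mul_pos hn0 hlam₀
  set M : Matrix (Fin n) (Fin n) ℝ := K + lam • 1 with hM_def
  set Mh : Matrix (Fin n) (Fin n) ℝ := Khat + lam • 1 with hMh_def
  have hMpd : M.PosDef := posDef_add_smul_one hK hlampos
  have hMhpd : Mh.PosDef := posDef_add_smul_one hKhat hlampos
  have hMinv : M * M⁻¹ = 1 :=
    Matrix.mul_nonsing_inv _ ((Matrix.isUnit_iff_isUnit_det _).mp hMpd.isUnit)
  have hMhinv : Mh⁻¹ * Mh = 1 :=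
    Matrix.nonsing_inv_mul _ ((Matrix.isUnit_iff_isUnit_det _).mp hMhpd.isUnit)
  have hidentity : Mh⁻¹ * (K - Khat) * M⁻¹ = Mh⁻¹ - M⁻¹ := by
    have hKK : K - Khat = M - Mh := by rw [hM_def, hMh_def]; abel
    rw [hKK, Matrix.mul_sub, Matrix.sub_mul, Matrix.mul_assoc, hMinv, Matrix.mul_one,
      hMhinv, Matrix.one_mul]
  have hdecomp : hhat - h =
      y ⬝ᵥ (Mh⁻¹ *ᵥ (kxhat - kx)) + y ⬝ᵥ (Mh⁻¹ *ᵥ ((K - Khat) *ᵥ (M⁻¹ *ᵥ kx))) := by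
    have e1 : Mh⁻¹ *ᵥ ((K - Khat) *ᵥ (M⁻¹ *ᵥ kx)) = (Mh⁻¹ - M⁻¹) *ᵥ kx := by
      rw [Matrix.mulVec_mulVec, Matrix.mulVec_mulVec, hidentity]
    rw [e1, hhatdef, hdef, Matrix.mulVec_sub, Matrix.sub_mulVec, dotProduct_sub,
      dotProduct_sub]
    ring
  -- norm facts
  have hNy : N y = s * σy := by
    rw [N_eq, hσy, hs_def, ← Real.sqrt_mul hn0.le]
    congr 1
    field_simp
  have hNkx : N kx ≤ s := by
    rw [N_eq, hs_def]
    refine Real.sqrt_le_sqrt ?_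
    calc ∑ i, kx i ^ 2 ≤ ∑ _i : Fin n, (1:ℝ) := by
          refine Finset.sum_le_sum fun i _ => ?_
          have := hkx i
          nlinarith [abs_nonneg (kx i), sq_abs (kx i)]
      _ = (n:ℝ) := by simp
  have hF' : Real.sqrt (∑ i, ∑ j, (K - Khat) i j ^ 2) ≤ (n:ℝ) * ε := by
    have : ∑ i, ∑ j, (K - Khat) i j ^ 2 = ∑ i, ∑ j, (Khat i j - K i j) ^ 2 := by
      refine Finset.sum_congr rfl fun i _ => Finset.sum_congr rfl fun j _ => ?_
      simp [Matrix.sub_apply]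
      ring
    rw [this]
    exact part2
  -- term bounds
  have hσy0 : 0 ≤ σy := by rw [hσy]; exact Real.sqrt_nonneg _
  have t1 : |y ⬝ᵥ (Mh⁻¹ *ᵥ (kxhat - kx))| ≤ σy * ε / lam₀ := by
    have hu : N (Mh⁻¹ *ᵥ (kxhat - kx)) ≤ (1 / lam) * (s * ε) := by
      refine (N_inv_mulVec_le hKhat hlampos _).trans ?_
      exact mul_le_mul_of_nonneg_left hNdk (by positivity)
    calc |y ⬝ᵥ (Mh⁻¹ *ᵥ (kxhat - kx))| ≤ N y * N (Mh⁻¹ *ᵥ (kxhat - kx)) := cs _ _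
      _ ≤ N y * ((1 / lam) * (s * ε)) :=
          mul_le_mul_of_nonneg_left hu (N_nonneg _)
      _ = σy * ε / lam₀ := by
          rw [hNy, hlam_def]
          field_simp
          linear_combination σy * ε * hs
  have t2 : |y ⬝ᵥ (Mh⁻¹ *ᵥ ((K - Khat) *ᵥ (M⁻¹ *ᵥ kx)))| ≤ σy * ε / lam₀ ^ 2 := by
    have hw : N ((K - Khat) *ᵥ (M⁻¹ *ᵥ kx)) ≤ ((n:ℝ) * ε) * ((1 / lam) * s) := by
      refine (N_mulVec_le _ _).trans ?_
      refine mul_le_mul hF' ?_ (N_nonneg _) (by positivity)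
      refine (N_inv_mulVec_le hK hlampos _).trans ?_
      exact mul_le_mul_of_nonneg_left hNkx (by positivity)
    have hu : N (Mh⁻¹ *ᵥ ((K - Khat) *ᵥ (M⁻¹ *ᵥ kx))) ≤
        (1 / lam) * (((n:ℝ) * ε) * ((1 / lam) * s)) := by
      refine (N_inv_mulVec_le hKhat hlampos _).trans ?_
      exact mul_le_mul_of_nonneg_left hw (by positivity)
    calc |y ⬝ᵥ (Mh⁻¹ *ᵥ ((K - Khat) *ᵥ (M⁻¹ *ᵥ kx)))|
        ≤ N y * N (Mh⁻¹ *ᵥ ((K - Khat) *ᵥ (M⁻¹ *ᵥ kx))) := cs _ _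
      _ ≤ N y * ((1 / lam) * (((n:ℝ) * ε) * ((1 / lam) * s))) :=
          mul_le_mul_of_nonneg_left hu (N_nonneg _)
      _ = σy * ε / lam₀ ^ 2 := by
          rw [hNy, hlam_def]
          field_simp
          linear_combination σy * ε * hs
  calc |hhat - h| ≤ |y ⬝ᵥ (Mh⁻¹ *ᵥ (kxhat - kx))| +
        |y ⬝ᵥ (Mh⁻¹ *ᵥ ((K - Khat) *ᵥ (M⁻¹ *ᵥ kx)))| := by
        rw [hdecomp]; exact abs_add_le _ _
    _ ≤ σy * ε / lam₀ + σy * ε / lam₀ ^ 2 := add_le_add t1 t2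
    _ = ((lam₀ + 1) / lam₀ ^ 2) * σy * ε := by field_simp
end
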